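/- Let F : ℝ × ℝ^{m×n} → ℝ^{m×n} satisfy ⟨Y, F(t, Y)⟩_F = 0 for all Y ∈ ℝ^{m×n} and all t. Let Û ∈ ℝ^{m×k} and V̂ ∈ ℝ^{n×k} have orthonormal columns, and let S : ℝ → ℝ^{k×k} be differentiable on [t0, t1] with S'(t) = Ûᵀ F(t, Û S(t) V̂ᵀ) V̂ for all t ∈ [t0, t1]. Then ‖S(t)‖_F = ‖S(t0)‖_F for all t ∈ [t0, t1]. -/

import Mathlib

open Matrix

/-- The Frobenius inner product `⟨A, B⟩_F = trace(Aᵀ B)`. -/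
noncomputable def frobInner {m n : ℕ} (A B : Matrix (Fin m) (Fin n) ℝ) : ℝ :=
  (Aᵀ * B).trace

/-- The Frobenius norm `‖A‖_F = ⟨A, A⟩_F^{1/2}`. -/
noncomputable def frobNorm {m n : ℕ} (A : Matrix (Fin m) (Fin n) ℝ) : ℝ :=
  Real.sqrt (frobInner A A)

lemma frobInner_eq_sum {m n : ℕ} (A B : Matrix (Fin m) (Fin n) ℝ) :
    frobInner A B = ∑ j, ∑ i, A i j * B i j := by
  simp [frobInner, Matrix.trace, Matrix.diag, Matrix.mul_apply, Matrix.transpose_apply]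

lemma frobInner_shift {m n k : ℕ} (S : Matrix (Fin k) (Fin k) ℝ)
    (Uhat : Matrix (Fin m) (Fin k) ℝ) (Vhat : Matrix (Fin n) (Fin k) ℝ)
    (G : Matrix (Fin m) (Fin n) ℝ) :
    frobInner S (Uhatᵀ * G * Vhat) = frobInner (Uhat * S * Vhatᵀ) G := by
  unfold frobInner
  rw [show Sᵀ * (Uhatᵀ * G * Vhat) = (Sᵀ * Uhatᵀ * G) * Vhat by simp [Matrix.mul_assoc],
    Matrix.trace_mul_comm]
  congr 1
  simp [Matrix.transpose_mul, Matrix.mul_assoc]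

/-- Core of the norm-preservation theorem (Theorem 4): if `⟨Y, F(t,Y)⟩_F = 0` for all `Y, t`,
then the Galerkin S-step preserves the Frobenius norm of `S`. -/
theorem sStep_norm_preservation
    {m n k : ℕ} {t0 t1 : ℝ}
    (F : ℝ → Matrix (Fin m) (Fin n) ℝ → Matrix (Fin m) (Fin n) ℝ)
    (hF : ∀ t Y, frobInner Y (F t Y) = 0)
    (Uhat : Matrix (Fin m) (Fin k) ℝ) (Vhat : Matrix (Fin n) (Fin k) ℝ)
    (hU : Uhatᵀ * Uhat = 1) (hV : Vhatᵀ * Vhat = 1)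
    (S : ℝ → Matrix (Fin k) (Fin k) ℝ)
    (hS : ∀ t ∈ Set.Icc t0 t1, ∀ i j,
      HasDerivAt (fun s => S s i j) ((Uhatᵀ * F t (Uhat * S t * Vhatᵀ) * Vhat) i j) t) :
    ∀ t ∈ Set.Icc t0 t1, frobNorm (S t) = frobNorm (S t0) := by
  set g : ℝ → ℝ := fun s => ∑ j, ∑ i, S s i j * S s i j with hg
  have key : ∀ s ∈ Set.Icc t0 t1, HasDerivAt g 0 s := by
    intro s hs
    have hD := hS s hs
    set D := Uhatᵀ * F s (Uhat * S s * Vhatᵀ) * Vhat with hDdef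
    have h1 : HasDerivAt g (∑ j, ∑ i, (D i j * S s i j + S s i j * D i j)) s := by
      apply HasDerivAt.fun_sum; intro j _; apply HasDerivAt.fun_sum; intro i _
      exact (hD i j).mul (hD i j)
    have h0 : (∑ j : Fin k, ∑ i : Fin k, (D i j * S s i j + S s i j * D i j)) = 0 := by
      have hz : frobInner (S s) D = 0 := by
        rw [hDdef, frobInner_shift]; exact hF s _
      rw [frobInner_eq_sum] at hz
      calc (∑ j : Fin k, ∑ i : Fin k, (D i j * S s i j + S s i j * D i j))
          = 2 * ∑ j : Fin k, ∑ i : Fin k, S s i j * D i j := by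
            rw [Finset.mul_sum]; congr 1; ext j
            rw [Finset.mul_sum]; congr 1; ext i; ring
        _ = 0 := by rw [hz]; ring
    rwa [h0] at h1
  have hconst : ∀ t ∈ Set.Icc t0 t1, g t = g t0 := by
    apply constant_of_has_deriv_right_zero
    · exact fun x hx => ((key x hx).continuousAt).continuousWithinAt
    · exact fun x hx => ((key x (Set.mem_Icc_of_Ico hx)).hasDerivWithinAt)
  intro t ht
  have hgt : ∀ u, frobInner (S u) (S u) = g u := fun u => frobInner_eq_sum _ _
  unfold frobNorm
  rw [hgt, hgt, hconst t ht]
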